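/- For a homogeneous element p supported on words of length n in the free monoid M_k, the left multiplication operator on ℓ²(M_k) given by convolution with p has operator norm equal to the ℓ² norm of p, i.e., sup{‖p * q‖₂ : q finitely supported, ‖q‖₂ ≤ 1} = ‖p‖₂. -/

import Mathlib

open Pointwise


/-- The ℓ² norm of a finitely supported function on the free monoid. -/
noncomputable def l2norm {k : ℕ} (p : MonoidAlgebra ℂ (FreeMonoid (Fin k))) : ℝ :=
  Real.sqrt (∑ x ∈ p.coeff.support, ‖p.coeff x‖ ^ 2)

instance {α : Type*} [DecidableEq α] : DecidableEq (FreeMonoid α) :=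
  inferInstanceAs (DecidableEq (List α))

lemma homog_mul_apply {k n : ℕ} (p q : MonoidAlgebra ℂ (FreeMonoid (Fin k)))
    (hp : ∀ x ∈ p.coeff.support, x.length = n) {x y : FreeMonoid (Fin k)}
    (hx : x ∈ p.coeff.support) : (p * q).coeff (x * y) = p.coeff x * q.coeff y := by
  rw [MonoidAlgebra.coeff_mul]
  simp only [Finsupp.sum]
  rw [Finset.sum_eq_single x]
  · by_cases hy : y ∈ q.coeff.support
    · rw [Finset.sum_eq_single y]
      · simp
      · intro b hb hby
        rw [if_neg]
        intro hxb
        exact hby (mul_left_cancel hxb)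
      · intro hy'; exact absurd hy hy'
    · have hq : q.coeff y = 0 := Finsupp.notMem_support_iff.mp hy
      rw [hq, mul_zero]
      apply Finset.sum_eq_zero
      intro b hb
      rw [if_neg]
      intro hxb
      exact hy (mul_left_cancel hxb ▸ hb)
  · intro a ha hax
    apply Finset.sum_eq_zero
    intro b hb
    rw [if_neg]
    intro hab
    have hlen : a.length = x.length := by rw [hp a ha, hp x hx]
    exact hax (List.append_inj hab hlen).1
  · intro hx'; exact absurd hx hx'

lemma l2norm_mul_homog {k n : ℕ} (p q : MonoidAlgebra ℂ (FreeMonoid (Fin k)))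
    (hp : ∀ x ∈ p.coeff.support, x.length = n) :
    l2norm (p * q) = l2norm p * l2norm q := by
  unfold l2norm
  rw [← Real.sqrt_mul (by positivity), Finset.sum_mul_sum]
  congr 1
  have hsub : (p * q).coeff.support ⊆ p.coeff.support * q.coeff.support := MonoidAlgebra.support_coeff_mul_subset p q
  rw [Finset.sum_subset hsub (by
    intro z _ hz
    rw [Finsupp.notMem_support_iff.mp hz]
    simp)]
  rw [Finset.mul_def, Finset.sum_image (by
    rintro ⟨a, b⟩ hab ⟨c, d⟩ hcd h
    simp only [Finset.coe_product, Set.mem_prod, Finset.mem_coe, Finset.mem_product] at hab hcd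
    have hlen : a.length = c.length := by rw [hp a hab.1, hp c hcd.1]
    obtain ⟨h1, h2⟩ := List.append_inj h hlen
    exact Prod.ext (FreeMonoid.toList.injective h1) (FreeMonoid.toList.injective h2))]
  rw [Finset.sum_product]
  apply Finset.sum_congr rfl
  intro x hx
  apply Finset.sum_congr rfl
  intro y hy
  rw [homog_mul_apply p q hp hx, norm_mul, mul_pow]

lemma l2norm_one {k : ℕ} : l2norm (1 : MonoidAlgebra ℂ (FreeMonoid (Fin k))) = 1 := by
  unfold l2norm
  rw [MonoidAlgebra.one_def, MonoidAlgebra.coeff_single, Finsupp.support_single_ne_zero _ one_ne_zero]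
  simp

lemma l2norm_nonneg {k : ℕ} (p : MonoidAlgebra ℂ (FreeMonoid (Fin k))) : 0 ≤ l2norm p :=
  Real.sqrt_nonneg _

/-- For `p` homogeneous of degree `n` (supported on words of length `n`), the operator
norm of left convolution by `p` on `ℓ²(M_k)` equals `‖p‖₂`: the value `‖p‖₂` is the
greatest element of `{‖p * q‖₂ : q finitely supported, ‖q‖₂ ≤ 1}`. -/
theorem convolution_norm_of_homogeneous {k n : ℕ}
    (p : MonoidAlgebra ℂ (FreeMonoid (Fin k)))
    (hp : ∀ x ∈ p.coeff.support, x.length = n) :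
    IsGreatest {r : ℝ | ∃ q : MonoidAlgebra ℂ (FreeMonoid (Fin k)),
      l2norm q ≤ 1 ∧ r = l2norm (p * q)} (l2norm p) := by
  constructor
  · exact ⟨1, le_of_eq l2norm_one, by rw [mul_one]⟩
  · rintro r ⟨q, hq, rfl⟩
    rw [l2norm_mul_homog p q hp]
    calc l2norm p * l2norm q ≤ l2norm p * 1 :=
          mul_le_mul_of_nonneg_left hq (l2norm_nonneg p)
      _ = l2norm p := mul_one _
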